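/- Let d and r₂ be positive integers with r₂ ≥ 1 and k ∈ ℤ_{++}^{r₂} (with k_{r₂+1} := 0). Then the following identity of rational functions of λ holds (equivalently, the polynomial identity obtained by cross-multiplying denominators): [∏_{a=1}^{r₂}(λ − d(a−1)/2)_{2k_{r₂}}] · C₁^{d,d/2}(λ, (k₁,…,k_{r₂})) = C₁^{d,d/2}(λ + 2k_{r₂}, (k₁−k_{r₂}, …, k_{r₂−1}−k_{r₂})) · ∏_{i=1}^{r₂}(λ + k_i − d(r₂+i−2)/4)_{k_{r₂}}, where on the right-hand side C₁^{d,d/2} is formed for the (r₂−1)-tuple (k₁−k_{r₂},…,k_{r₂−1}−k_{r₂}) ∈ ℤ_{++}^{r₂−1}. -/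

import Mathlib

open Polynomial Finset

/-- `(p)_m := ∏_{t=0}^{m−1}(p + t)` for a polynomial `p ∈ ℂ[X]`. -/
noncomputable def pochOf (p : Polynomial ℂ) (m : ℕ) : Polynomial ℂ :=
  ∏ t ∈ Finset.range m, (p + (t : Polynomial ℂ))

noncomputable def Q (c : ℂ) (n : ℕ) : Polynomial ℂ := pochOf (Polynomial.X + Polynomial.C c) n

lemma pochOf_add (p : Polynomial ℂ) (a b : ℕ) :
    pochOf p (a + b) = pochOf p a * pochOf (p + Polynomial.C (a : ℂ)) b := by
  unfold pochOf
  rw [Finset.prod_range_add]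
  congr 1
  refine Finset.prod_congr rfl fun t _ => ?_
  push_cast [Polynomial.C_eq_natCast]
  ring

lemma Q_add (c : ℂ) (a b : ℕ) : Q c (a + b) = Q c a * Q (c + a) b := by
  unfold Q
  rw [pochOf_add, Polynomial.C_add, add_assoc]

lemma Q_congr {c c' : ℂ} (n : ℕ) (h : c = c') : Q c n = Q c' n := by rw [h]

lemma pochOf_sub_eq (c : ℂ) (n : ℕ) :
    pochOf (Polynomial.X - Polynomial.C c) n = Q (-c) n := by
  unfold Q; rw [sub_eq_add_neg, ← Polynomial.C_neg]

lemma pochOf_add_eq (c : ℂ) (n : ℕ) :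
    pochOf (Polynomial.X + Polynomial.C c) n = Q c n := rfl

lemma tri_split {M : Type*} [CommMonoid M] (g : ℕ → ℕ → M) (s : ℕ) :
    ∏ i ∈ Icc 1 (s+1), ∏ j ∈ Icc (i+1) (s+1), g i j
      = ((∏ i ∈ Icc 1 s, ∏ j ∈ Icc (i+1) s, g i j) * ∏ i ∈ Icc 1 s, g i (s+1)) := by
  rw [Finset.prod_Icc_succ_top (by omega : 1 ≤ s+1)]
  rw [show Icc (s+1+1) (s+1) = (∅ : Finset ℕ) by simp]
  rw [Finset.prod_empty, mul_one, ← Finset.prod_mul_distrib]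
  refine Finset.prod_congr rfl fun i hi => ?_
  simp only [Finset.mem_Icc] at hi
  rw [Finset.prod_Icc_succ_top (by omega : i+1 ≤ s+1)]

lemma Icc_shift {M : Type*} [CommMonoid M] (g : ℕ → M) (a b : ℕ) :
    ∏ j ∈ Icc (a+1) (b+1), g j = ∏ j ∈ Icc a b, g (j+1) := by
  rw [← Finset.map_add_right_Icc a b 1, Finset.prod_map]
  rfl

lemma Icc_split_bot {M : Type*} [CommMonoid M] (g : ℕ → M) (a b : ℕ) (h : a ≤ b) :
    ∏ j ∈ Icc a b, g j = g a * ∏ j ∈ Icc (a+1) b, g j := by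
  rw [show Icc a b = insert a (Icc (a+1) b) by ext x; simp [Finset.mem_Icc]; omega]
  rw [Finset.prod_insert (by simp)]


set_option maxHeartbeats 1000000 in
/-- The inductive step (rank `r₂` to rank `r₂−1`) of Theorem 6.1 (case ε₂=1, d₂=d/2):
`[∏_{a=1}^{r₂}(λ−d(a−1)/2)_{2k_{r₂}}]·C₁^{d,d/2}(λ,(k₁,…,k_{r₂}))
  = C₁^{d,d/2}(λ+2k_{r₂},(k₁−k_{r₂},…,k_{r₂−1}−k_{r₂}))·∏_{i=1}^{r₂}(λ+k_i−d(r₂+i−2)/4)_{k_{r₂}}`,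
stated as the polynomial identity obtained by cross-multiplying denominators. -/
theorem simple_const_recursion (d r₂ : ℕ) (hd : 0 < d) (hr₂ : 1 ≤ r₂)
    (k : ℕ → ℕ) (hk : ∀ i j, 1 ≤ i → i ≤ j → j ≤ r₂ → k j ≤ k i)
    (hk0 : k (r₂ + 1) = 0) :
    (∏ a ∈ Finset.Icc 1 r₂,
        pochOf (Polynomial.X -
          Polynomial.C ((d : ℂ) * ((a : ℂ) - 1) / 2)) (2 * k r₂)) *
      (∏ i ∈ Finset.Icc 1 r₂, ∏ j ∈ Finset.Icc (i + 1) r₂,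
        pochOf (Polynomial.X -
          Polynomial.C ((d : ℂ) * ((i : ℂ) + (j : ℂ) - 2) / 4)) (k i + k j)) *
      (∏ i ∈ Finset.Icc 1 r₂, ∏ j ∈ Finset.Icc (i + 1) r₂,
        pochOf (Polynomial.X +
          Polynomial.C (2 * (k r₂ : ℂ) - (d : ℂ) * ((i : ℂ) + (j : ℂ) - 3) / 4))
          (k i + k j - 2 * k r₂)) =
    (∏ i ∈ Finset.Icc 1 (r₂ - 1), ∏ j ∈ Finset.Icc (i + 1) (r₂ - 1),
        pochOf (Polynomial.X +
          Polynomial.C (2 * (k r₂ : ℂ) - (d : ℂ) * ((i : ℂ) + (j : ℂ) - 2) / 4))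
          (k i + k j - 2 * k r₂)) *
      (∏ i ∈ Finset.Icc 1 r₂,
        pochOf (Polynomial.X +
          Polynomial.C ((k i : ℂ) - (d : ℂ) * ((r₂ : ℂ) + (i : ℂ) - 2) / 4)) (k r₂)) *
      (∏ i ∈ Finset.Icc 1 (r₂ + 1), ∏ j ∈ Finset.Icc (i + 1) (r₂ + 1),
        pochOf (Polynomial.X -
          Polynomial.C ((d : ℂ) * ((i : ℂ) + (j : ℂ) - 3) / 4)) (k i + k j)) := by
  obtain ⟨s, rfl⟩ : ∃ s, r₂ = s + 1 := ⟨r₂ - 1, by omega⟩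
  simp only [pochOf_sub_eq, pochOf_add_eq, Nat.add_sub_cancel]

  have hmono : ∀ i, 1 ≤ i → i ≤ s + 1 → k (s+1) ≤ k i :=
    fun i h1 h2 => hk i (s+1) h1 h2 le_rfl
  -- Atom products
  have e1 : (∏ a ∈ Icc 1 (s+1), Q (-((d:ℂ) * ((a:ℂ) - 1) / 2)) (2 * k (s+1)))
      = (∏ a ∈ Icc 1 s, Q (-((d:ℂ) * ((a:ℂ) - 1) / 2)) (2 * k (s+1))) *
        Q (-((d:ℂ) * (s:ℂ) / 2)) (2 * k (s+1)) := by
    rw [Finset.prod_Icc_succ_top (by omega : 1 ≤ s+1)]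
    congr 1
    exact Q_congr _ (by push_cast; ring)
  have e2 : (∏ i ∈ Icc 1 (s+1), ∏ j ∈ Icc (i+1) (s+1),
        Q (-((d:ℂ) * ((i:ℂ) + (j:ℂ) - 2) / 4)) (k i + k j))
      = ((∏ i ∈ Icc 1 s, ∏ j ∈ Icc (i+1) s,
            Q (-((d:ℂ) * ((i:ℂ) + (j:ℂ) - 2) / 4)) (2 * k (s+1))) *
          (∏ i ∈ Icc 1 s, ∏ j ∈ Icc (i+1) s,
            Q (2 * (k (s+1) : ℂ) - (d:ℂ) * ((i:ℂ) + (j:ℂ) - 2) / 4)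
              (k i + k j - 2 * k (s+1)))) *
        (∏ i ∈ Icc 1 s, Q (-((d:ℂ) * ((i:ℂ) + (s:ℂ) - 1) / 4)) (k i + k (s+1))) := by
    rw [tri_split]
    congr 1
    · calc
        ∏ i ∈ Icc 1 s, ∏ j ∈ Icc (i+1) s,
            Q (-((d:ℂ) * ((i:ℂ) + (j:ℂ) - 2) / 4)) (k i + k j)
          = ∏ i ∈ Icc 1 s, ∏ j ∈ Icc (i+1) s,
              (Q (-((d:ℂ) * ((i:ℂ) + (j:ℂ) - 2) / 4)) (2 * k (s+1)) *
               Q (2 * (k (s+1) : ℂ) - (d:ℂ) * ((i:ℂ) + (j:ℂ) - 2) / 4)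
                 (k i + k j - 2 * k (s+1))) := by
            refine Finset.prod_congr rfl fun i hi => Finset.prod_congr rfl fun j hj => ?_
            simp only [Finset.mem_Icc] at hi hj
            have h1 : k (s+1) ≤ k i := hmono i (by omega) (by omega)
            have h2 : k (s+1) ≤ k j := hmono j (by omega) (by omega)
            conv_lhs => rw [show k i + k j = 2 * k (s+1) + (k i + k j - 2 * k (s+1)) by
              omega, Q_add]
            congr 1
            exact Q_congr _ (by push_cast; ring)
        _ = _ := by simp only [Finset.prod_mul_distrib]
    · refine Finset.prod_congr rfl fun i hi => ?_
      exact Q_congr _ (by push_cast; ring)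
  have e4 : (∏ i ∈ Icc 1 (s+1), Q (-((d:ℂ) * ((i:ℂ) + (s:ℂ) - 1) / 4)) (k i)) *
        (∏ i ∈ Icc 1 (s+1),
          Q ((k i : ℂ) - (d:ℂ) * (((s+1 : ℕ) : ℂ) + (i:ℂ) - 2) / 4) (k (s+1)))
      = (∏ i ∈ Icc 1 s, Q (-((d:ℂ) * ((i:ℂ) + (s:ℂ) - 1) / 4)) (k i + k (s+1))) *
        Q (-((d:ℂ) * (s:ℂ) / 2)) (2 * k (s+1)) := by
    rw [← Finset.prod_mul_distrib]
    have step : ∀ i ∈ Icc 1 (s+1),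
        Q (-((d:ℂ) * ((i:ℂ) + (s:ℂ) - 1) / 4)) (k i) *
          Q ((k i : ℂ) - (d:ℂ) * (((s+1 : ℕ) : ℂ) + (i:ℂ) - 2) / 4) (k (s+1))
        = Q (-((d:ℂ) * ((i:ℂ) + (s:ℂ) - 1) / 4)) (k i + k (s+1)) := by
      intro i hi
      rw [Q_add]
      congr 1
      exact Q_congr _ (by push_cast; ring)
    rw [Finset.prod_congr rfl step, Finset.prod_Icc_succ_top (by omega : 1 ≤ s+1)]
    congr 1
    rw [show k (s+1) + k (s+1) = 2 * k (s+1) by omega]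
    exact Q_congr _ (by push_cast; ring)
  have e3 : (∏ i ∈ Icc 1 (s+1+1), ∏ j ∈ Icc (i+1) (s+1+1),
        Q (-((d:ℂ) * ((i:ℂ) + (j:ℂ) - 3) / 4)) (k i + k j))
      = ((∏ a ∈ Icc 1 s, Q (-((d:ℂ) * ((a:ℂ) - 1) / 2)) (2 * k (s+1))) *
          (∏ i ∈ Icc 1 s, ∏ j ∈ Icc (i+1) s,
            Q (-((d:ℂ) * ((i:ℂ) + (j:ℂ) - 2) / 4)) (2 * k (s+1))) *
          (∏ i ∈ Icc 1 (s+1), ∏ j ∈ Icc (i+1) (s+1),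
            Q (2 * (k (s+1) : ℂ) - (d:ℂ) * ((i:ℂ) + (j:ℂ) - 3) / 4)
              (k i + k j - 2 * k (s+1)))) *
        (∏ i ∈ Icc 1 (s+1), Q (-((d:ℂ) * ((i:ℂ) + (s:ℂ) - 1) / 4)) (k i)) := by
    rw [tri_split]
    refine congrArg₂ (· * ·) ?_ ?_
    · calc
        ∏ i ∈ Icc 1 (s+1), ∏ j ∈ Icc (i+1) (s+1),
            Q (-((d:ℂ) * ((i:ℂ) + (j:ℂ) - 3) / 4)) (k i + k j)
          = ∏ i ∈ Icc 1 (s+1), ∏ j ∈ Icc (i+1) (s+1),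
              (Q (-((d:ℂ) * ((i:ℂ) + (j:ℂ) - 3) / 4)) (2 * k (s+1)) *
               Q (2 * (k (s+1) : ℂ) - (d:ℂ) * ((i:ℂ) + (j:ℂ) - 3) / 4)
                 (k i + k j - 2 * k (s+1))) := by
            refine Finset.prod_congr rfl fun i hi => Finset.prod_congr rfl fun j hj => ?_
            simp only [Finset.mem_Icc] at hi hj
            have h1 : k (s+1) ≤ k i := hmono i (by omega) (by omega)
            have h2 : k (s+1) ≤ k j := hmono j (by omega) (by omega)
            conv_lhs => rw [show k i + k j = 2 * k (s+1) + (k i + k j - 2 * k (s+1)) by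
              omega, Q_add]
            congr 1
            exact Q_congr _ (by push_cast; ring)
        _ = (∏ i ∈ Icc 1 (s+1), ∏ j ∈ Icc (i+1) (s+1),
              Q (-((d:ℂ) * ((i:ℂ) + (j:ℂ) - 3) / 4)) (2 * k (s+1))) *
            (∏ i ∈ Icc 1 (s+1), ∏ j ∈ Icc (i+1) (s+1),
              Q (2 * (k (s+1) : ℂ) - (d:ℂ) * ((i:ℂ) + (j:ℂ) - 3) / 4)
                (k i + k j - 2 * k (s+1))) := by
            simp only [Finset.prod_mul_distrib]
        _ = _ := by
            refine congrArg₂ (· * ·) ?_ rfl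
            calc
              ∏ i ∈ Icc 1 (s+1), ∏ j ∈ Icc (i+1) (s+1),
                  Q (-((d:ℂ) * ((i:ℂ) + (j:ℂ) - 3) / 4)) (2 * k (s+1))
                = ∏ i ∈ Icc 1 (s+1), ∏ j ∈ Icc i s,
                    Q (-((d:ℂ) * ((i:ℂ) + (j:ℂ) - 2) / 4)) (2 * k (s+1)) := by
                  refine Finset.prod_congr rfl fun i hi => ?_
                  rw [Icc_shift]
                  exact Finset.prod_congr rfl fun j hj => Q_congr _ (by push_cast; ring)
              _ = ∏ i ∈ Icc 1 s, ∏ j ∈ Icc i s,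
                    Q (-((d:ℂ) * ((i:ℂ) + (j:ℂ) - 2) / 4)) (2 * k (s+1)) := by
                  rw [Finset.prod_Icc_succ_top (by omega : 1 ≤ s+1),
                    Finset.Icc_eq_empty (by omega : ¬ s + 1 ≤ s), Finset.prod_empty,
                    mul_one]
              _ = ∏ i ∈ Icc 1 s,
                    (Q (-((d:ℂ) * ((i:ℂ) - 1) / 2)) (2 * k (s+1)) *
                     ∏ j ∈ Icc (i+1) s,
                       Q (-((d:ℂ) * ((i:ℂ) + (j:ℂ) - 2) / 4)) (2 * k (s+1))) := by
                  refine Finset.prod_congr rfl fun i hi => ?_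
                  simp only [Finset.mem_Icc] at hi
                  rw [Icc_split_bot _ i s (by omega)]
                  congr 1
                  exact Q_congr _ (by push_cast; ring)
              _ = _ := by rw [Finset.prod_mul_distrib]
    · refine Finset.prod_congr rfl fun i hi => ?_
      simp only [hk0, Nat.add_zero]
      exact Q_congr _ (by push_cast; ring)
  rw [e1, e2, e3]
  linear_combination (-((∏ i ∈ Icc 1 s, ∏ j ∈ Icc (i+1) s,
      Q (2 * (k (s+1) : ℂ) - (d:ℂ) * ((i:ℂ) + (j:ℂ) - 2) / 4)
        (k i + k j - 2 * k (s+1))) *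
    (∏ a ∈ Icc 1 s, Q (-((d:ℂ) * ((a:ℂ) - 1) / 2)) (2 * k (s+1))) *
    (∏ i ∈ Icc 1 s, ∏ j ∈ Icc (i+1) s,
      Q (-((d:ℂ) * ((i:ℂ) + (j:ℂ) - 2) / 4)) (2 * k (s+1))) *
    (∏ i ∈ Icc 1 (s+1), ∏ j ∈ Icc (i+1) (s+1),
      Q (2 * (k (s+1) : ℂ) - (d:ℂ) * ((i:ℂ) + (j:ℂ) - 3) / 4)
        (k i + k j - 2 * k (s+1))))) * e4
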